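/- arXiv:math/0610921 — 5 statements merged into one kernel-verified Lean document; each statement's English description precedes it below -/
import Mathlib

section
/- Let A be a ring with 1/2, Q ∈ A, and suppose u = (1+Q)/2 + ((1−Q)/2)z is a unit in the Laurent polynomial ring A[z,z⁻¹]. Define S ∈ A to be the coefficient of z⁰ in ((1+Q)/2 − ((1−Q)/2)z)·u⁻¹. Then S² = 1 and S commutes with Q. -/
open LaurentPolynomial

lemma kill_helper {A : Type*} [Ring A] {p q x y : A} (hc : Commute p q)
    (hpq : p + q = 1) (N : ℕ) (hx : x * q ^ N = 0) (hy : p ^ N * y = 0) :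
    x * y = 0 := by
  have h1 : (1 : A) = ∑ i ∈ Finset.range (2*N+1), p^i * q^(2*N-i) * ((2*N).choose i : A) := by
    calc (1:A) = (p+q)^(2*N) := by rw [hpq, one_pow]
    _ = _ := hc.add_pow (2*N)
  calc x * y = x * 1 * y := by rw [mul_one]
  _ = ∑ i ∈ Finset.range (2*N+1), x * (p^i * q^(2*N-i) * ((2*N).choose i : A)) * y := by
      rw [h1, Finset.mul_sum, Finset.sum_mul]
  _ = 0 := by
      apply Finset.sum_eq_zero
      intro i hi
      rcases le_or_gt i N with h | h
      · have hj : 2*N - i = N + (N - i) := by omega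
        rw [(hc.pow_pow i (2*N-i)).eq, hj, pow_add]
        simp only [← mul_assoc]
        rw [hx, zero_mul, zero_mul, zero_mul, zero_mul]
      · have hi' : i = (i - N) + N := by omega
        rw [mul_assoc (p^i), ← (Nat.cast_commute ((2*N).choose i) (q^(2*N-i))).eq,
          ← mul_assoc]
        -- goal: x * p ^ i * (↑c * q ^ j) * y = 0
        rw [mul_assoc x (p^i),
          (Commute.mul_right (Nat.cast_commute ((2*N).choose i) (p^i)).symm
            (hc.pow_pow i (2*N-i))).eq, ← mul_assoc, hi', pow_add, ← mul_assoc,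
          mul_assoc _ (p ^ N) y, hy, mul_zero]

theorem stmt_7 (A : Type*) [Ring A] [Invertible (2 : A)] (Q : A)
    (hu : IsUnit (C (⅟2 * (1 + Q)) + C (⅟2 * (1 - Q)) * T 1))
    (S : A)
    (hS : S = (((C (⅟2 * (1 + Q)) - C (⅟2 * (1 - Q)) * T 1) *
      ((hu.unit⁻¹ : (LaurentPolynomial A)ˣ) : LaurentPolynomial A) : LaurentPolynomial A).coeff : ℤ →₀ A) 0) :
    S ^ 2 = 1 ∧ Commute S Q := by
  set a : A := ⅟2 * (1 + Q) with ha
  set b : A := ⅟2 * (1 - Q) with hb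
  set u : LaurentPolynomial A := C a + C b * T 1 with hu'
  set v : LaurentPolynomial A := ((hu.unit⁻¹ : (LaurentPolynomial A)ˣ) : LaurentPolynomial A) with hv
  rw [← ha, ← hb] at hS
  have husp : (hu.unit : LaurentPolynomial A) = u := hu.unit_spec
  have huv : u * v = 1 := hu.mul_val_inv
  have hvu : v * u = 1 := hu.val_inv_mul
  have hCQv : Commute (C Q) v := by
    have hCQu : Commute (C Q) u := by
      rw [hu']
      have hc2 : ∀ x : A, Commute x (⅟2 : A) := by
        intro x
        have h2 : Commute x (2 : A) := by
          have h12 : (2:A) = 1 + 1 := one_add_one_eq_two.symm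
          rw [h12]; exact (Commute.one_right x).add_right (Commute.one_right x)
        exact h2.invOf_right
      have hQa : Commute Q a := by
        rw [ha]
        exact (hc2 Q).mul_right ((Commute.one_right Q).add_right (Commute.refl Q))
      have hQb : Commute Q b := by
        rw [hb]
        exact (hc2 Q).mul_right ((Commute.one_right Q).sub_right (Commute.refl Q))
      have h1 : Commute (C Q) (C a) := hQa.map (C : A →+* LaurentPolynomial A)
      have h2 : Commute (C Q) (C b) := hQb.map (C : A →+* LaurentPolynomial A)
      exact h1.add_right (h2.mul_right (commute_T 1 (C Q)).symm)
    have h1 : Commute (C Q) (hu.unit : LaurentPolynomial A) := by rwa [husp]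
    have h2 := h1.units_inv_right
    rwa [← hv] at h2
  clear_value u v
  have hc2 : ∀ x : A, Commute x (⅟2 : A) := by
    intro x
    have h2 : Commute x (2 : A) := by
      have h12 : (2:A) = 1 + 1 := one_add_one_eq_two.symm
      rw [h12]; exact (Commute.one_right x).add_right (Commute.one_right x)
    exact h2.invOf_right
  have hQa : Commute Q a := by
    rw [ha]
    exact (hc2 Q).mul_right ((Commute.one_right Q).add_right (Commute.refl Q))
  have hQb : Commute Q b := by
    rw [hb]
    exact (hc2 Q).mul_right ((Commute.one_right Q).sub_right (Commute.refl Q))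
  have hab1 : a + b = 1 := by
    rw [ha, hb, ← mul_add]
    have h : (1 + Q) + (1 - Q) = 2 := by rw [add_add_sub_cancel, one_add_one_eq_two]
    rw [h, invOf_mul_self]
  have hCab : Commute a b := by
    have h : b = 1 - a := by rw [← hab1]; abel
    rw [h]; exact (Commute.one_right a).sub_right (Commute.refl a)
  clear_value a b
  -- coefficient lemmas
  have coeffAdd : ∀ (f g : LaurentPolynomial A) (n : ℤ),
      (f + g : LaurentPolynomial A).coeff n = f.coeff n + g.coeff n :=
    fun f g n => rfl
  have coeffSub : ∀ (f g : LaurentPolynomial A) (n : ℤ),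
      (f - g : LaurentPolynomial A).coeff n = f.coeff n - g.coeff n :=
    fun f g n => rfl
  have coeffCmul : ∀ (r : A) (f : LaurentPolynomial A) (n : ℤ),
      (C r * f : LaurentPolynomial A).coeff n = r * f.coeff n :=
    fun r f n => AddMonoidAlgebra.coeff_single_zero_mul f r n
  have coeffmulC : ∀ (r : A) (f : LaurentPolynomial A) (n : ℤ),
      (f * C r : LaurentPolynomial A).coeff n = f.coeff n * r :=
    fun r f n => AddMonoidAlgebra.coeff_mul_single_zero f r n
  have coeffCT : ∀ (r : A) (f : LaurentPolynomial A) (n : ℤ),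
      (C r * T 1 * f : LaurentPolynomial A).coeff n = r * f.coeff (n - 1) := by
    intro r f n; rw [← single_eq_C_mul_T, AddMonoidAlgebra.coeff_single_mul_apply]; ring_nf
  have coeffmulCT : ∀ (r : A) (f : LaurentPolynomial A) (n : ℤ),
      (f * (C r * T 1) : LaurentPolynomial A).coeff n = f.coeff (n - 1) * r := by
    intro r f n; rw [← single_eq_C_mul_T, AddMonoidAlgebra.coeff_mul_single_apply, ← sub_eq_add_neg]
  have coeffOne : ∀ n : ℤ, (1 : LaurentPolynomial A).coeff n = if n = 0 then 1 else 0 := by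
    intro n; rw [← single_zero_one_eq_one, AddMonoidAlgebra.coeff_single, Finsupp.single_apply]; simp [eq_comm]
  -- coefficient recurrences
  have cu : ∀ n : ℤ, a * v.coeff n + b * v.coeff (n - 1)
      = if n = 0 then 1 else 0 := by
    intro n
    have h := congrArg (fun f : LaurentPolynomial A => f.coeff n) huv
    simp only [hu', add_mul] at h
    rwa [coeffAdd, coeffCmul, coeffCT, coeffOne] at h
  have cv : ∀ n : ℤ, v.coeff n * a + v.coeff (n - 1) * b
      = if n = 0 then 1 else 0 := by
    intro n
    have h := congrArg (fun f : LaurentPolynomial A => f.coeff n) hvu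
    simp only [hu', mul_add] at h
    rwa [coeffAdd, coeffmulC, coeffmulCT, coeffOne] at h
  have cQ : ∀ n : ℤ, Q * v.coeff n = v.coeff n * Q := by
    intro n
    have h := congrArg (fun f : LaurentPolynomial A => f.coeff n) hCQv.eq
    rwa [coeffCmul, coeffmulC] at h

  -- recurrences via induction
  have keyN : ∀ m : ℕ, v.coeff 0 * (-b) ^ m = v.coeff (m : ℤ) * a ^ m := by
    intro m
    induction m with
    | zero => simp
    | succ m ih =>
      have h := cv ((m : ℤ) + 1)
      rw [if_neg (by omega), add_sub_cancel_right] at h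
      have hr : v.coeff (m : ℤ) * (-b) = v.coeff ((m : ℤ) + 1) * a := by
        rw [mul_neg]; exact neg_eq_of_add_eq_zero_left h
      calc v.coeff 0 * (-b) ^ (m+1) = (v.coeff 0 * (-b) ^ m) * (-b) := by
            rw [pow_succ, ← mul_assoc]
      _ = v.coeff (m : ℤ) * a ^ m * (-b) := by rw [ih]
      _ = v.coeff (m : ℤ) * ((-b) * a ^ m) := by
            rw [mul_assoc, ((hCab.neg_right).pow_left m).eq]
      _ = (v.coeff (m : ℤ) * (-b)) * a ^ m := by rw [mul_assoc]
      _ = v.coeff ((m : ℤ) + 1) * a * a ^ m := by rw [hr]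
      _ = v.coeff ((m+1 : ℕ) : ℤ) * a ^ (m+1) := by
            rw [mul_assoc, ← pow_succ']; push_cast; ring_nf
  have keyM : ∀ m : ℕ, (-a) ^ m * v.coeff (-1) = b ^ m * v.coeff (-1 - (m : ℤ)) := by
    intro m
    induction m with
    | zero => simp
    | succ m ih =>
      have h := cu (-1 - (m : ℤ))
      rw [if_neg (by omega)] at h
      have hr : (-a) * v.coeff (-1 - (m : ℤ)) = b * v.coeff (-1 - (m : ℤ) - 1) := by
        rw [neg_mul]; exact neg_eq_of_add_eq_zero_right h
      calc (-a) ^ (m+1) * v.coeff (-1) = (-a) * ((-a) ^ m * v.coeff (-1)) := by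
            rw [pow_succ', mul_assoc]
      _ = (-a) * (b ^ m * v.coeff (-1 - (m : ℤ))) := by rw [ih]
      _ = b ^ m * ((-a) * v.coeff (-1 - (m : ℤ))) := by
            rw [← mul_assoc, ((hCab.neg_left).pow_right m).eq, mul_assoc]
      _ = b ^ m * (b * v.coeff (-1 - (m : ℤ) - 1)) := by rw [hr]
      _ = b ^ (m+1) * v.coeff (-1 - ((m+1 : ℕ) : ℤ)) := by
            rw [← mul_assoc, ← pow_succ]
            congr 1
            push_cast
            ring_nf
  -- choose N beyond the support of v
  set M : ℕ := v.coeff.support.sup (fun i => i.natAbs) with hM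
  set N : ℕ := M + 1 with hN
  have hsupN : ∀ k : ℤ, M < k.natAbs → v.coeff k = 0 := by
    intro k hk
    by_contra hne
    have hmem : k ∈ v.coeff.support := Finsupp.mem_support_iff.mpr hne
    have h := Finset.le_sup (f := fun i : ℤ => i.natAbs) hmem
    rw [← hM] at h
    omega
  have hVN : v.coeff (N : ℤ) = 0 := hsupN _ (by simp [hN]; omega)
  have hVM : v.coeff (-1 - (N : ℤ)) = 0 := hsupN _ (by simp [hN]; omega)
  have hb0 : v.coeff 0 * (-b) ^ N = 0 := by rw [keyN N, hVN, zero_mul]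
  have ha0 : (-a) ^ N * v.coeff (-1) = 0 := by rw [keyM N, hVM, mul_zero]
  have hb0' : v.coeff 0 * b ^ N = 0 := by
    rcases Nat.even_or_odd N with he | ho
    · rwa [he.neg_pow] at hb0
    · rw [ho.neg_pow, mul_neg, neg_eq_zero] at hb0; exact hb0
  have ha0' : a ^ N * v.coeff (-1) = 0 := by
    rcases Nat.even_or_odd N with he | ho
    · rwa [he.neg_pow] at ha0
    · rw [ho.neg_pow, neg_mul, neg_eq_zero] at ha0; exact ha0
  have key0 : v.coeff 0 * v.coeff (-1) = 0 :=
    kill_helper hCab hab1 N hb0' ha0'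
  -- endgame
  have h0 := cu 0
  rw [if_pos rfl] at h0
  norm_num at h0
  -- h0 : a * V 0 + b * V (-1) = 1
  have hsub : ((C a - C b * T 1) * v : LaurentPolynomial A) = C a * v - C b * T 1 * v :=
    sub_mul _ _ _
  rw [hsub, coeffSub, coeffCmul, coeffCT] at hS
  norm_num at hS
  -- hS : S = a * V 0 - b * V (-1)
  have hQV0 : Commute Q (v.coeff 0) := cQ 0
  have hQVm : Commute Q (v.coeff (-1)) := cQ (-1)
  have hV0b : Commute (v.coeff 0) b := by
    rw [hb]; exact (hc2 _).mul_right ((Commute.one_right _).sub_right hQV0.symm)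
  have ts0 : (a * v.coeff 0) * (b * v.coeff (-1)) = 0 := by
    calc (a * v.coeff 0) * (b * v.coeff (-1))
        = a * ((v.coeff 0 * b) * v.coeff (-1)) := by
          rw [mul_assoc, ← mul_assoc (v.coeff 0)]
    _ = a * (b * (v.coeff 0 * v.coeff (-1))) := by rw [hV0b.eq, mul_assoc]
    _ = 0 := by rw [key0, mul_zero, mul_zero]
  have hy : b * v.coeff (-1) = 1 - a * v.coeff 0 := eq_sub_of_add_eq' h0
  have hxx : (a * v.coeff 0) * (a * v.coeff 0) = a * v.coeff 0 := by
    have h := ts0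
    rw [hy, mul_sub, mul_one] at h
    exact (sub_eq_zero.mp h).symm
  have hSx : S = 2 * (a * v.coeff 0) - 1 := by
    rw [hS, hy, two_mul]; abel
  constructor
  · calc S ^ 2 = (2 * (a * v.coeff 0) - 1) * (2 * (a * v.coeff 0) - 1) := by
          rw [hSx, sq]
    _ = 4 * ((a * v.coeff 0) * (a * v.coeff 0)) - 4 * (a * v.coeff 0) + 1 := by
          noncomm_ring
    _ = 4 * (a * v.coeff 0) - 4 * (a * v.coeff 0) + 1 := by rw [hxx]
    _ = 1 := by rw [sub_self, zero_add]
  · rw [hS]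
    exact Commute.sub_left (Commute.mul_left hQa.symm hQV0.symm)
      (Commute.mul_left hQb.symm hQVm.symm)
end

section
/- Let A be a ring with 1/2, S ∈ A, and suppose v = z⁻¹·(((1+z)/2)² − ((1−z)/2)²·S) is a unit in A[z,z⁻¹]. Define R ∈ A as the coefficient of z⁰ in S·v⁻¹. Then R² = S and R commutes with S. -/
open LaurentPolynomial

namespace Sqrt8Aux

variable {R S' : Type*} [Ring R] [Ring S']

noncomputable instance instCoeFunLaurent {R : Type*} [Semiring R] :
    CoeFun R[T;T⁻¹] (fun _ => ℤ → R) := ⟨fun p => ⇑p.coeff⟩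

lemma coeff_C_mul (a : R) (f : R[T;T⁻¹]) (n : ℤ) : (C a * f) n = a * f n := by
  simpa using AddMonoidAlgebra.coeff_single_mul_apply f a (0:ℤ) n

lemma coeff_mul_C (a : R) (f : R[T;T⁻¹]) (n : ℤ) : (f * C a) n = f n * a := by
  simpa using AddMonoidAlgebra.coeff_mul_single_apply f a (0:ℤ) n

lemma coeff_T_mul (m : ℤ) (f : R[T;T⁻¹]) (n : ℤ) : ((T m : R[T;T⁻¹]) * f) n = f (n - m) := by
  have := AddMonoidAlgebra.coeff_single_mul_apply f (1:R) m n
  simpa [sub_eq_neg_add] using this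

lemma coeff_one (n : ℤ) : (1 : R[T;T⁻¹]) n = if n = 0 then 1 else 0 := by
  have : (1 : R[T;T⁻¹]) = AddMonoidAlgebra.single (0:ℤ) (1:R) := rfl
  rw [this, AddMonoidAlgebra.coeff_single, Finsupp.single_apply]
  simp [eq_comm]

/-- `T` as a monoid hom from `Multiplicative ℤ`. -/
noncomputable def TMon (S' : Type*) [Ring S'] : Multiplicative ℤ →* S'[T;T⁻¹] where
  toFun n := T n.toAdd
  map_one' := T_zero
  map_mul' m n := T_add _ _

/-- Coefficientwise map of Laurent polynomials along a ring hom. -/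
noncomputable def lmap (f : R →+* S') : R[T;T⁻¹] →+* S'[T;T⁻¹] :=
  AddMonoidAlgebra.liftNCRingHom (C.comp f) (TMon S')
    (fun x y => ((T_mul y.toAdd (C (f x)))).symm)

lemma lmap_single (f : R →+* S') (n : ℤ) (a : R) :
    lmap f (AddMonoidAlgebra.single n a) = C (f a) * T n := by
  have h : lmap f (AddMonoidAlgebra.single n a)
      = (C.comp f) a * (TMon S') (Multiplicative.ofAdd n) :=
    AddMonoidAlgebra.liftNC_single _ _ _ _
  simpa [TMon] using h

lemma lmap_C (f : R →+* S') (a : R) : lmap f (C a) = C (f a) := by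
  have : (C a : R[T;T⁻¹]) = AddMonoidAlgebra.single (0:ℤ) a := rfl
  rw [this, lmap_single, T_zero, mul_one]

lemma lmap_T (f : R →+* S') (n : ℤ) : lmap f (T n) = T n := by
  have : (T n : R[T;T⁻¹]) = AddMonoidAlgebra.single n (1:R) := rfl
  rw [this, lmap_single, map_one, map_one, one_mul]

lemma lmap_apply (f : R →+* S') (p : R[T;T⁻¹]) (n : ℤ) : lmap f p n = f (p n) := by
  induction p using AddMonoidAlgebra.induction_linear with
  | zero => simp
  | add p q hp hq =>
      rw [map_add]
      have h1 : (lmap f p + lmap f q) n = lmap f p n + lmap f q n := Finsupp.add_apply _ _ _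
      have h2 : (p + q) n = p n + q n := Finsupp.add_apply _ _ _
      rw [h1, h2, map_add, hp, hq]
  | single a b =>
      rw [lmap_single, ← single_eq_C_mul_T]
      rw [AddMonoidAlgebra.coeff_single, AddMonoidAlgebra.coeff_single, Finsupp.single_apply, Finsupp.single_apply]
      split <;> simp

lemma lmap_injective {f : R →+* S'} (hf : Function.Injective f) :
    Function.Injective (lmap f) := by
  intro p q h
  apply LaurentPolynomial.ext
  intro n
  apply hf
  rw [← lmap_apply, ← lmap_apply, h]


/-- The key commutative computation, assuming a square root `r` of `S` exists. -/
lemma core2 {B : Type*} [CommRing B] [Invertible (2:B)] (S r : B) (hr : r^2 = S)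
    (w : B[T;T⁻¹])
    (hw : (T (-1) * ((C (⅟2 : B) * (1 + T 1)) ^ 2 - (C (⅟2 : B) * (1 - T 1)) ^ 2 * C S)) * w = 1) :
    (S * w 0) ^ 2 = S := by
  have h2 : (⅟2 : B) * 2 = 1 := invOf_mul_self _
  set a : B := ⅟2 * (1 + r) with ha
  set b : B := ⅟2 * (1 - r) with hb
  have hab1 : a + b = 1 := by rw [ha, hb]; linear_combination h2
  have hab2 : a - b = r := by rw [ha, hb]; linear_combination r * h2
  set u₁ : B[T;T⁻¹] := C a + C b * T 1 with hu₁
  set u₂ : B[T;T⁻¹] := C b + C a * T 1 with hu₂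
  have hCa : C a = C (⅟2 : B) * (1 + C r) := by rw [ha, map_mul, map_add, map_one]
  have hCb : C b = C (⅟2 : B) * (1 - C r) := by rw [hb, map_mul, map_sub, map_one]
  have hCr2 : (C r : B[T;T⁻¹])^2 = C S := by rw [← map_pow, hr]
  have hfac : (C (⅟2 : B) * (1 + T 1)) ^ 2 - (C (⅟2 : B) * (1 - T 1)) ^ 2 * C S = u₁ * u₂ := by
    rw [hu₁, hu₂, hCa, hCb]
    linear_combination (C (⅟2 : B) * (1 - T 1))^2 * hCr2
  rw [hfac] at hw
  set v : B[T;T⁻¹] := T (-1) * (u₁ * u₂) with hv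
  have hvw : v * w = 1 := by rw [hv]; linear_combination hw
  have hwv : w * v = 1 := by rw [mul_comm]; exact hvw
  have hxy : (T 1 : B[T;T⁻¹]) * T (-1) = 1 := by
    rw [← T_add]; norm_num
  set g : B[T;T⁻¹] := u₂ * (T (-1) * w) with hgdef
  have hg : u₁ * g = 1 := by rw [hgdef]; linear_combination hvw
  set s : B[T;T⁻¹] := invert g with hsdef
  have hs : (C a + C b * T (-1)) * s = 1 := by
    have h := congrArg (invert (R := B)) hg
    rw [map_mul, map_one, hu₁] at h
    simp only [map_add, map_mul, invert_C, invert_T] at h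
    exact h
  have hu2s : u₂ * s = T 1 := by
    rw [hu₂]; linear_combination (T 1 : B[T;T⁻¹]) * hs - C b * s * hxy
  have hCab : (C a : B[T;T⁻¹])^2 - (C b)^2 = C r := by
    rw [← map_pow, ← map_pow, ← map_sub]
    congr 1
    linear_combination (a - b) * hab1 + hab2
  have key : C r * w = C a * g - C b * (T (-1) * s) := by
    have e1 : v * (C r * w) = C r := by linear_combination (C r : B[T;T⁻¹]) * hvw
    have e2 : v * (C a * g - C b * (T (-1) * s)) = C r := by
      rw [hv, hu₁, hu₂] at *
      linear_combination (C a * T (-1) * (C b + C a * T 1)) * hg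
        - (C b * T (-1)^2 * (C a + C b * T 1)) * hu2s
        - (C b * T (-1) * (C a + C b * T 1)) * hxy
        + ((C a : B[T;T⁻¹])^2 - (C b)^2) * hxy + hCab
    have h1 : w * (v * (C r * w)) = w * (v * (C a * g - C b * (T (-1) * s))) := by
      rw [e1, e2]
    simp only [← mul_assoc] at h1
    rw [hwv, one_mul, one_mul, mul_assoc (C b)] at h1
    exact h1
  have hkey0 : r * w 0 = a * g 0 - b * g (-1) := by
    have h := congrArg (fun p : B[T;T⁻¹] => p 0) key
    rw [coeff_C_mul] at h
    have hsub : ((C a * g) - (C b * ((T (-1) : B[T;T⁻¹]) * s))) 0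
        = (C a * g) 0 - (C b * ((T (-1) : B[T;T⁻¹]) * s)) 0 := Finsupp.sub_apply _ _ _
    rw [hsub, coeff_C_mul, coeff_C_mul, coeff_T_mul] at h
    rw [hsdef] at h
    rw [invert_apply] at h
    norm_num at h
    exact h
  have hrec : ∀ n : ℤ, a * g n + b * g (n - 1) = if n = 0 then 1 else 0 := by
    intro n
    have h := congrArg (fun p : B[T;T⁻¹] => p n) hg
    rw [hu₁, add_mul, mul_assoc] at h
    have hadd : ((C a * g) + (C b * ((T 1 : B[T;T⁻¹]) * g))) n
        = (C a * g) n + (C b * ((T 1 : B[T;T⁻¹]) * g)) n := Finsupp.add_apply _ _ _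
    rw [hadd, coeff_C_mul, coeff_C_mul, coeff_T_mul, coeff_one] at h
    exact h
  have h0 : a * g 0 + b * g (-1) = 1 := by
    have := hrec 0
    norm_num at this
    exact this
  have hind : ∀ k : ℕ, a * b * (g 0 * g (-1)) = a * b * (g k * g (-1 - k)) := by
    intro k
    induction k with
    | zero => norm_num
    | succ k ih =>
      have e1 : a * g ((k:ℤ)+1) + b * g (k:ℤ) = 0 := by
        have h := hrec ((k:ℤ)+1)
        rw [if_neg (by omega)] at h
        simpa using h
      have e2 : a * g (-1 - (k:ℤ)) + b * g (-2 - (k:ℤ)) = 0 := by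
        have h := hrec (-1 - (k:ℤ))
        rw [if_neg (by omega)] at h
        have : (-1 - (k:ℤ)) - 1 = -2 - k := by ring
        rwa [this] at h
      rw [ih]
      push_cast
      rw [show (-1 - ((k:ℤ)+1)) = -2 - (k:ℤ) from by ring]
      linear_combination (a * g (-1 - (k:ℤ))) * e1 - (a * g ((k:ℤ)+1)) * e2
  have hksupp : ∃ k : ℕ, g (k:ℤ) = 0 := by
    refine ⟨g.coeff.support.sup Int.natAbs + 1, ?_⟩
    by_contra h
    have hmem : ((g.coeff.support.sup Int.natAbs + 1 : ℕ) : ℤ) ∈ g.coeff.support :=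
      Finsupp.mem_support_iff.2 h
    have hle := Finset.le_sup (f := Int.natAbs) hmem
    rw [Int.natAbs_natCast] at hle
    omega
  obtain ⟨k, hk⟩ := hksupp
  have hab0 : a * b * (g 0 * g (-1)) = 0 := by rw [hind k, hk]; ring
  linear_combination (-(S * (w 0)^2)) * hr + S*(r * w 0 + a * g 0 - b * g (-1)) * hkey0
    + S*(a * g 0 + b * g (-1) + 1) * h0 - 4*S*hab0


/-- The commutative case, reducing to `core2` by adjoining a square root. -/
lemma core {B : Type*} [CommRing B] [Invertible (2:B)] (S : B) (w : B[T;T⁻¹])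
    (hw : (T (-1) * ((C (⅟2 : B) * (1 + T 1)) ^ 2 - (C (⅟2 : B) * (1 - T 1)) ^ 2 * C S)) * w = 1) :
    (S * w 0) ^ 2 = S := by
  set f : Polynomial B := Polynomial.X ^ 2 - Polynomial.C S with hf
  have hmonic : f.Monic := Polynomial.monic_X_pow_sub_C S (by norm_num)
  set B' := AdjoinRoot f with hB'
  set ι : B →+* B' := algebraMap B B' with hι'
  have hι : Function.Injective ι := by
    intro x y hxy
    nontriviality B
    have hdeg : (Polynomial.C (x - y)).degree < f.degree := by
      have hd2 : f.degree = 2 := by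
        rw [hf]
        exact Polynomial.degree_X_pow_sub_C (by norm_num) S
      calc (Polynomial.C (x - y)).degree ≤ 0 := Polynomial.degree_C_le
        _ < f.degree := by rw [hd2]; norm_num
    have h0 : AdjoinRoot.mk f (Polynomial.C (x - y)) = 0 := by
      have hxy0 : ι (x - y) = 0 := by rw [map_sub, hxy, sub_self]
      rwa [hι', AdjoinRoot.algebraMap_eq, AdjoinRoot.of, RingHom.comp_apply] at hxy0
    have h1 := congrArg (AdjoinRoot.modByMonicHom hmonic) h0
    rw [AdjoinRoot.modByMonicHom_mk, map_zero,
      (Polynomial.modByMonic_eq_self_iff hmonic).2 hdeg] at h1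
    exact sub_eq_zero.mp (Polynomial.C_eq_zero.mp h1)
  letI : Invertible (2 : B') := (Invertible.map ι (2:B)).copy 2 (map_ofNat ι 2).symm
  have hhalf : C (ι (⅟2 : B)) = C (⅟(2:B') : B') := by
    congr 1
  have hr : (AdjoinRoot.root f) ^ 2 = ι S := by
    have h := AdjoinRoot.eval₂_root f
    rw [hf] at h
    simp only [Polynomial.eval₂_sub, Polynomial.eval₂_pow, Polynomial.eval₂_X,
      Polynomial.eval₂_C] at h
    rw [sub_eq_zero] at h
    rw [h, hι', AdjoinRoot.algebraMap_eq]
  have hw' : (T (-1) * ((C (⅟2 : B') * (1 + T 1)) ^ 2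
      - (C (⅟2 : B') * (1 - T 1)) ^ 2 * C (ι S))) * lmap ι w = 1 := by
    have h := congrArg (lmap ι) hw
    rw [map_one] at h
    simp only [map_mul, map_sub, map_add, map_pow, map_one, lmap_C, lmap_T] at h
    rwa [hhalf] at h
  have hcore := core2 (ι S) (AdjoinRoot.root f) hr (lmap ι w) hw'
  apply hι
  rw [map_pow, map_mul, ← lmap_apply ι w 0]
  exact hcore

end Sqrt8Aux

open Sqrt8Aux in
theorem stmt_8 (A : Type*) [Ring A] [Invertible (2 : A)] (S : A)
    (hv : IsUnit (T (-1) *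
      ((C (⅟2 : A) * (1 + T 1)) ^ 2 - (C (⅟2 : A) * (1 - T 1)) ^ 2 * C S)))
    (R : A)
    (hR : R = (((C S * ((hv.unit⁻¹ : (LaurentPolynomial A)ˣ) : LaurentPolynomial A) :
      LaurentPolynomial A).coeff : ℤ →₀ A) 0)) :
    R ^ 2 = S ∧ Commute R S := by
  set v : A[T;T⁻¹] := T (-1) *
      ((C (⅟2 : A) * (1 + T 1)) ^ 2 - (C (⅟2 : A) * (1 - T 1)) ^ 2 * C S) with hvdef
  set w : A[T;T⁻¹] := ((hv.unit⁻¹ : (LaurentPolynomial A)ˣ) : LaurentPolynomial A) with hwdef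
  have hvw : v * w = 1 := hv.mul_val_inv
  have hwv : w * v = 1 := hv.val_inv_mul
  have hhalf : ∀ x : A, Commute x (⅟2 : A) := by
    intro x
    have h2 : Commute x (2 : A) := by
      rw [← one_add_one_eq_two]
      exact (Commute.one_right x).add_right (Commute.one_right x)
    exact h2.invOf_right
  -- coefficients of w commute with everything commuting with S
  have hcw : ∀ c : A, c * S = S * c → ∀ n : ℤ, c * w n = w n * c := by
    intro c hc
    have h1 : Commute (C c) (T (-1) : A[T;T⁻¹]) := (T_mul (-1) (C c)).symm
    have h2 : Commute (C c) (T 1 : A[T;T⁻¹]) := (T_mul 1 (C c)).symm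
    have h3 : Commute (C c) (C S : A[T;T⁻¹]) := by
      show C c * C S = C S * C c
      rw [← map_mul, ← map_mul, hc]
    have h4 : Commute (C c) (C (⅟2 : A) : A[T;T⁻¹]) := by
      show C c * C (⅟2 : A) = C (⅟2 : A) * C c
      rw [← map_mul, ← map_mul, hhalf c]
    have hCv : C c * v = v * C c := by
      rw [hvdef]
      exact h1.mul_right
        ((((h4.mul_right ((Commute.one_right _).add_right h2)).pow_right 2).sub_right
          (((h4.mul_right ((Commute.one_right _).sub_right h2)).pow_right 2).mul_right h3)))
    have hCw : C c * w = w * C c := by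
      have h1' := congrArg (fun t => w * t * w) hCv
      rw [show w * (C c * v) * w = w * C c * (v * w) from by simp only [mul_assoc],
        show w * (v * C c) * w = (w * v) * (C c * w) from by simp only [mul_assoc],
        hvw, hwv, mul_one, one_mul] at h1'
      exact h1'.symm
    intro n
    have h := congrArg (fun p : A[T;T⁻¹] => p n) hCw
    rwa [coeff_C_mul, coeff_mul_C] at h
  have hS_w : ∀ n : ℤ, S * w n = w n * S := fun n => hcw S rfl n
  have hw_w : ∀ m n : ℤ, w m * w n = w n * w m := fun m n => hcw (w m) (hS_w m).symm n
  -- the commutative subring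
  set s : Set A := insert S (insert (⅟2 : A) (Set.range fun n : ℤ => w n)) with hsdef
  have hScomm : ∀ x ∈ s, ∀ y ∈ s, x * y = y * x := by
    intro x hx y hy
    rw [hsdef] at hx hy
    rcases hx with rfl | hx
    · rcases hy with rfl | hy
      · rfl
      · rcases hy with rfl | ⟨n, rfl⟩
        · exact hhalf _
        · exact hS_w n
    · rcases hx with rfl | ⟨m, rfl⟩
      · exact (hhalf y).symm.eq
      · rcases hy with rfl | hy
        · exact (hS_w m).symm
        · rcases hy with rfl | ⟨n, rfl⟩
          · exact hhalf _
          · exact hw_w m n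
  letI : CommRing (Subring.closure s) := Subring.closureCommRingOfComm hScomm
  have hmemS : S ∈ Subring.closure s := Subring.subset_closure (Set.mem_insert _ _)
  have hmem2 : (⅟2 : A) ∈ Subring.closure s :=
    Subring.subset_closure (Set.mem_insert_of_mem _ (Set.mem_insert _ _))
  have hmemw : ∀ n : ℤ, w n ∈ Subring.closure s := fun n =>
    Subring.subset_closure (Set.mem_insert_of_mem _ (Set.mem_insert_of_mem _ ⟨n, rfl⟩))
  have hc2 : ((2 : Subring.closure s) : A) = 2 := by norm_cast
  letI : Invertible (2 : Subring.closure s) :=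
    ⟨⟨⅟2, hmem2⟩, Subtype.ext (by push_cast; rw [hc2]; exact invOf_mul_self 2),
      Subtype.ext (by push_cast; rw [hc2]; exact mul_invOf_self 2)⟩
  set S' : Subring.closure s := ⟨S, hmemS⟩ with hS'def
  set ι : Subring.closure s →+* A := SubringClass.subtype (Subring.closure s) with hιdef
  set wT : (Subring.closure s)[T;T⁻¹] :=
    AddMonoidAlgebra.ofCoeff (⟨w.coeff.support, fun n => ⟨w n, hmemw n⟩, fun n => by
      rw [w.coeff.mem_support_toFun n]
      simp only [ne_eq, Subtype.ext_iff, ZeroMemClass.coe_zero]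
      exact Iff.rfl⟩ : ℤ →₀ (Subring.closure s)) with hwTdef
  have hwT : lmap ι wT = w := by
    apply LaurentPolynomial.ext
    intro n
    rw [lmap_apply]
    rfl
  set vT : (Subring.closure s)[T;T⁻¹] := T (-1) *
      ((C (⅟2 : Subring.closure s) * (1 + T 1)) ^ 2
        - (C (⅟2 : Subring.closure s) * (1 - T 1)) ^ 2 * C S') with hvTdef
  have hvT : lmap ι vT = v := by
    rw [hvTdef, hvdef]
    simp only [map_mul, map_sub, map_add, map_pow, map_one, lmap_C, lmap_T]
    rfl
  have hinj : Function.Injective ι := fun a b h => Subtype.ext h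
  have hvTwT : vT * wT = 1 := by
    apply lmap_injective hinj
    rw [map_mul, hvT, hwT, map_one, hvw]
  have hcoreT := core S' wT hvTwT
  have hfinal : (S * w 0) ^ 2 = S := by
    have h := congrArg Subtype.val hcoreT
    push_cast at h
    exact h
  have hR0 : R = S * w 0 := by
    rw [hR]
    exact coeff_C_mul S w 0
  constructor
  · rw [hR0]; exact hfinal
  · show R * S = S * R
    rw [hR0, mul_assoc, ← hS_w 0, ← mul_assoc]
end

section
/- Let A be any ring (2 not assumed invertible), P ∈ A, and suppose u = (1−P) + P·z is a unit in A[z,z⁻¹]. Define E ∈ A as the coefficient of z⁰ in (P·z)·u⁻¹. Then E² = E. -/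
open LaurentPolynomial

instance instCoeFunLaurentStmt9 {A : Type*} [Ring A] : CoeFun (LaurentPolynomial A) (fun _ => ℤ → A) :=
  ⟨fun p => ⇑p.coeff⟩

theorem stmt_9 (A : Type*) [Ring A] (P : A)
    (hu : IsUnit ((1 - C P) + C P * T 1))
    (E : A)
    (hE : E = (((C P * T 1 * ((hu.unit⁻¹ : (LaurentPolynomial A)ˣ) : LaurentPolynomial A) :
      LaurentPolynomial A).coeff : ℤ →₀ A) 0)) :
    E ^ 2 = E := by
  set v : LaurentPolynomial A := ((hu.unit⁻¹ : (LaurentPolynomial A)ˣ) : LaurentPolynomial A)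
    with hvdef
  have huv : ((1 - C P) + C P * T 1) * v = 1 := hu.mul_val_inv
  have hvu : v * ((1 - C P) + C P * T 1) = 1 := hu.val_inv_mul
  have hone : ∀ n : ℤ, (1 : LaurentPolynomial A) n = if n = 0 then 1 else 0 := by
    intro n
    rw [← T_zero, T_apply]
    simp [eq_comm]
  have a1 : ∀ n : ℤ, ((C P * v : LaurentPolynomial A)) n = P * v n := by
    intro n; rw [← single_eq_C]; exact AddMonoidAlgebra.coeff_single_zero_mul v P n
  have a2 : ∀ n : ℤ, ((C P * T 1 * v : LaurentPolynomial A)) n = P * v (n - 1) := by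
    intro n; rw [← single_eq_C_mul_T, AddMonoidAlgebra.coeff_single_mul_apply]; ring_nf
  have b1 : ∀ n : ℤ, ((v * C P : LaurentPolynomial A)) n = v n * P := by
    intro n; rw [← single_eq_C]; exact AddMonoidAlgebra.coeff_mul_single_zero v P n
  have b2 : ∀ n : ℤ, ((v * (C P * T 1) : LaurentPolynomial A)) n = v (n - 1) * P := by
    intro n; rw [← single_eq_C_mul_T, AddMonoidAlgebra.coeff_mul_single_apply, sub_eq_add_neg]
  have R1 : ∀ n : ℤ, v n - P * v n + P * v (n - 1) = if n = 0 then 1 else 0 := by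
    intro n
    have e1 : (v - C P * v + C P * T 1 * v : LaurentPolynomial A) = 1 := by
      rw [← huv]; noncomm_ring
    have s1 : ((v - C P * v + C P * T 1 * v : LaurentPolynomial A)) n
        = ((v - C P * v : LaurentPolynomial A)) n + ((C P * T 1 * v : LaurentPolynomial A)) n :=
      Finsupp.add_apply _ _ _
    have s2 : ((v - C P * v : LaurentPolynomial A)) n = v n - ((C P * v : LaurentPolynomial A)) n :=
      Finsupp.sub_apply _ _ _
    have h : ((v - C P * v + C P * T 1 * v : LaurentPolynomial A)) n
        = (1 : LaurentPolynomial A) n := by rw [e1]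
    rw [s1, s2, a1, a2, hone] at h
    exact h
  have R2 : ∀ n : ℤ, v n - v n * P + v (n - 1) * P = if n = 0 then 1 else 0 := by
    intro n
    have e2 : (v - v * C P + v * (C P * T 1) : LaurentPolynomial A) = 1 := by
      rw [← hvu]; noncomm_ring
    have s1 : ((v - v * C P + v * (C P * T 1) : LaurentPolynomial A)) n
        = ((v - v * C P : LaurentPolynomial A)) n + ((v * (C P * T 1) : LaurentPolynomial A)) n :=
      Finsupp.add_apply _ _ _
    have s2 : ((v - v * C P : LaurentPolynomial A)) n = v n - ((v * C P : LaurentPolynomial A)) n :=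
      Finsupp.sub_apply _ _ _
    have h : ((v - v * C P + v * (C P * T 1) : LaurentPolynomial A)) n
        = (1 : LaurentPolynomial A) n := by rw [e2]
    rw [s1, s2, b1, b2, hone] at h
    exact h
  -- the commutator P * v n - v n * P is a constant sequence
  have hd : ∀ n : ℤ, P * v n - v n * P = P * v (n + 1) - v (n + 1) * P := by
    intro n
    have h1 := R1 (n + 1); have h2 := R2 (n + 1)
    have e : n + 1 - 1 = n := by ring
    rw [e] at h1 h2
    have h4 : (P * v n - v n * P) - (P * v (n + 1) - v (n + 1) * P)
        = (v (n + 1) - P * v (n + 1) + P * v n) - (v (n + 1) - v (n + 1) * P + v n * P) := by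
      abel
    rw [h1, h2, sub_self] at h4
    exact sub_eq_zero.mp h4
  have hall : ∀ n : ℤ, P * v n - v n * P = P * v 0 - v 0 * P := by
    intro n
    induction n using Int.induction_on with
    | zero => rfl
    | succ k ih => rw [← hd (k : ℤ)]; exact ih
    | pred k ih =>
      have h := hd (-(k : ℤ) - 1)
      have e : -(k : ℤ) - 1 + 1 = -(k : ℤ) := by ring
      rw [e] at h
      rw [h]; exact ih
  obtain ⟨m1, hm1⟩ := Infinite.exists_notMem_finset v.coeff.support
  have hm1' : v m1 = 0 := Finsupp.notMem_support_iff.mp hm1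
  have h0 : P * v 0 - v 0 * P = 0 := by rw [← hall m1, hm1']; simp
  have hc : ∀ n : ℤ, P * v n = v n * P := by
    intro n
    exact sub_eq_zero.mp ((hall n).trans h0)
  -- rearranged recurrences
  have h1' : ∀ n : ℤ, P * v (n - 1) = (if n = 0 then 1 else 0) - v n + P * v n := by
    intro n
    have h4 : P * v (n - 1) - ((if n = 0 then 1 else 0) - v n + P * v n)
        = (v n - P * v n + P * v (n - 1)) - (if n = 0 then 1 else 0) := by abel
    rw [R1 n, sub_self] at h4
    exact sub_eq_zero.mp h4
  have h2' : ∀ n : ℤ, v (n - 1) * P = (if n = 0 then 1 else 0) - v n + v n * P := by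
    intro n
    have h4 : v (n - 1) * P - ((if n = 0 then 1 else 0) - v n + v n * P)
        = (v n - v n * P + v (n - 1) * P) - (if n = 0 then 1 else 0) := by abel
    rw [R2 n, sub_self] at h4
    exact sub_eq_zero.mp h4
  -- key identity
  have key : ∀ m n : ℤ, P * P * (v (m - 1) * v n) - P * P * (v m * v (n - 1))
      = (if m = 0 then P * v n else 0) - (if n = 0 then P * v m else 0) := by
    intro m n
    have eL : P * P * (v (m - 1) * v n) = P * (v (m - 1) * P) * v n := by
      rw [← hc (m - 1)]; noncomm_ring
    have eR : P * P * (v m * v (n - 1)) = P * v m * (P * v (n - 1)) := by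
      calc P * P * (v m * v (n - 1)) = P * (P * v m) * v (n - 1) := by noncomm_ring
        _ = P * (v m * P) * v (n - 1) := by rw [hc m]
        _ = P * v m * (P * v (n - 1)) := by noncomm_ring
    rw [eL, eR, h2' m, h1' n]
    split_ifs <;> noncomm_ring
  -- identify E
  have hE' : E = P * v (-1) := by
    rw [hE]
    have := a2 0
    norm_num at this ⊢
    exact this
  have hE2 : E ^ 2 = P * P * (v (-1) * v (-1)) := by
    rw [hE', sq]
    calc P * v (-1) * (P * v (-1)) = P * (v (-1) * P) * v (-1) := by noncomm_ring
      _ = P * P * (v (-1) * v (-1)) := by rw [← hc (-1)]; noncomm_ring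
  have k0 : P * P * (v (-1) * v (-1)) - P * P * (v 0 * v (-2)) = P * v (-1) := by
    have h := key 0 (-1)
    norm_num at h
    exact h
  -- telescoping
  have tel : ∀ k : ℕ, P * P * (v (k : ℤ) * v (-(k : ℤ) - 2))
      = P * P * (v ((k + 1 : ℕ) : ℤ) * v (-((k + 1 : ℕ) : ℤ) - 2)) := by
    intro k
    have h := key ((k : ℤ) + 1) (-(k : ℤ) - 2)
    have e1 : (k : ℤ) + 1 - 1 = (k : ℤ) := by ring
    have e2 : -(k : ℤ) - 2 - 1 = -(k : ℤ) - 3 := by ring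
    rw [e1, e2, if_neg (by omega), if_neg (by omega), sub_zero] at h
    have h' := sub_eq_zero.mp h
    rw [show ((k + 1 : ℕ) : ℤ) = (k : ℤ) + 1 by push_cast; ring,
      show -((k : ℤ) + 1) - 2 = -(k : ℤ) - 3 by ring]
    exact h'
  have tail0 : ∀ k : ℕ, P * P * (v 0 * v (-2)) = P * P * (v (k : ℤ) * v (-(k : ℤ) - 2)) := by
    intro k
    induction k with
    | zero => norm_num
    | succ k ih => rw [ih, tel k]
  obtain ⟨m0, hm0⟩ := Infinite.exists_notMem_finset (v.coeff.support.image Int.toNat)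
  have hv0 : v (m0 : ℤ) = 0 := by
    by_contra hne
    exact hm0 (Finset.mem_image.mpr ⟨(m0 : ℤ), Finsupp.mem_support_iff.mpr hne, by simp⟩)
  calc E ^ 2 = P * P * (v (-1) * v (-1)) := hE2
    _ = P * v (-1) + P * P * (v 0 * v (-2)) := eq_add_of_sub_eq k0
    _ = P * v (-1) + P * P * (v (m0 : ℤ) * v (-(m0 : ℤ) - 2)) := by rw [tail0 m0]
    _ = P * v (-1) := by rw [hv0]; simp
    _ = E := hE'.symm
end

section
/- Let A be any ring, T ∈ A, and suppose u = 1 + (z − 2 + z⁻¹)·T is a unit in A[z,z⁻¹]. Define F ∈ A as the coefficient of z⁰ in ((1+z)·T)·u⁻¹. Then F·(1−F) = T and F commutes with T. -/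
open LaurentPolynomial

/-- The involution `z ↦ z⁻¹` on Laurent polynomials over a (possibly noncommutative) ring. -/
noncomputable def stmt14Invert (A : Type*) [Ring A] :
    LaurentPolynomial A ≃ₐ[ℤ] LaurentPolynomial A :=
  AddMonoidAlgebra.domCongr ℤ A (AddEquiv.neg ℤ)

theorem stmt14_aux {A : Type*} [Ring A] (t : A) (u v G : LaurentPolynomial A)
    (hud : u = 1 + (T 1 - 2 + T (-1)) * C t)
    (huv : u * v = 1) (hvu : v * u = 1)
    (hGd : G = (1 + T 1) * C t * v) :
    ((AddMonoidAlgebra.coeff G) 0) * (1 - (AddMonoidAlgebra.coeff G) 0) = t ∧ Commute ((AddMonoidAlgebra.coeff G) 0) t := by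
  classical
  -- coefficient helper lemmas
  have hC : ∀ (x : A) (p : LaurentPolynomial A) (n : ℤ),
      (AddMonoidAlgebra.coeff (C x * p : LaurentPolynomial A)) n = x * (AddMonoidAlgebra.coeff p) n :=
    fun x p n => AddMonoidAlgebra.coeff_single_zero_mul p x n
  have hCr : ∀ (x : A) (p : LaurentPolynomial A) (n : ℤ),
      (AddMonoidAlgebra.coeff (p * C x : LaurentPolynomial A)) n = (AddMonoidAlgebra.coeff p) n * x :=
    fun x p n => AddMonoidAlgebra.coeff_mul_single_zero p x n
  have hT : ∀ (k : ℤ) (p : LaurentPolynomial A) (n : ℤ),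
      (AddMonoidAlgebra.coeff (T k * p : LaurentPolynomial A)) n = (AddMonoidAlgebra.coeff p) (n - k) := by
    intro k p n
    simpa [neg_add_eq_sub] using AddMonoidAlgebra.coeff_single_mul_apply p (1 : A) k n
  have hadd : ∀ (p q : LaurentPolynomial A) (n : ℤ),
      (AddMonoidAlgebra.coeff (p + q : LaurentPolynomial A)) n = (AddMonoidAlgebra.coeff p) n + (AddMonoidAlgebra.coeff q) n :=
    fun p q n => rfl
  have hsub : ∀ (p q : LaurentPolynomial A) (n : ℤ),
      (AddMonoidAlgebra.coeff (p - q : LaurentPolynomial A)) n = (AddMonoidAlgebra.coeff p) n - (AddMonoidAlgebra.coeff q) n := by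
    intro p q n
    rw [AddMonoidAlgebra.coeff_sub]; exact Finsupp.sub_apply _ _ n
  set g : ℤ → A := fun n => (AddMonoidAlgebra.coeff G) n with hg
  -- commutation with C x for x commuting with t
  have hCu : ∀ x : A, x * t = t * x → Commute (C x) u := by
    intro x hx
    rw [hud]
    refine Commute.add_right (Commute.one_right _) (Commute.mul_right ?_ ?_)
    · exact ((commute_T 1 (C x)).symm.sub_right (Commute.ofNat_right _ 2)).add_right
        (commute_T (-1) (C x)).symm
    · rw [commute_iff_eq, ← map_mul, ← map_mul, hx]
  have hKv : ∀ x : A, x * t = t * x → C x * v = v * C x := by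
    intro x hx
    have h1 := hCu x hx
    calc C x * v = (v * u) * (C x * v) := by rw [hvu, one_mul]
      _ = v * ((u * C x) * v) := by simp only [mul_assoc]
      _ = v * ((C x * u) * v) := by rw [← h1.eq]
      _ = (v * C x) * (u * v) := by simp only [mul_assoc]
      _ = v * C x := by rw [huv, mul_one]
  have hK : ∀ x : A, x * t = t * x → ∀ n, x * g n = g n * x := by
    intro x hx n
    have c1 : Commute (C x) (1 + T 1) := (Commute.one_right _).add_right (commute_T 1 (C x)).symm
    have c2 : Commute (C x) (C t) := by rw [commute_iff_eq, ← map_mul, ← map_mul, hx]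
    have cv : Commute (C x) v := hKv x hx
    have h3 : C x * G = G * C x := by rw [hGd]; exact ((c1.mul_right c2).mul_right cv).eq
    simp only [hg]
    calc x * (AddMonoidAlgebra.coeff G) n = (AddMonoidAlgebra.coeff (C x * G : LaurentPolynomial A)) n := (hC x G n).symm
      _ = (AddMonoidAlgebra.coeff (G * C x : LaurentPolynomial A)) n := by rw [h3]
      _ = (AddMonoidAlgebra.coeff G) n * x := hCr x G n
  have hgt : ∀ n, t * g n = g n * t := fun n => hK t rfl n
  have hgg : ∀ n m, g n * g m = g m * g n := fun n m => hK (g n) (hgt n).symm m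
  -- the key equation u * G = (1 + T 1) * C t
  have huG : u * G = (1 + T 1) * C t := by
    have hP : Commute u ((1 + T 1) * C t) :=
      ((Commute.one_right u).add_right (commute_T 1 u).symm).mul_right (hCu t rfl).symm
    rw [hGd]
    calc u * ((1 + T 1) * C t * v) = (u * ((1 + T 1) * C t)) * v := by simp only [mul_assoc]
      _ = (((1 + T 1) * C t) * u) * v := by rw [hP.eq]
      _ = ((1 + T 1) * C t) * (u * v) := by simp only [mul_assoc]
      _ = (1 + T 1) * C t := by rw [huv, mul_one]
  -- the recurrence on coefficients
  have hrec : ∀ n : ℤ, g n + (t * g (n - 1) - (t * g n + t * g n) + t * g (n + 1))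
      = (if (0 : ℤ) = n then t else 0) + (if (1 : ℤ) = n then t else 0) := by
    intro n
    have eL : (1 + (T 1 - 2 + T (-1)) * C t) * G
        = G + (T 1 * (C t * G) - ((C t * G) + (C t * G)) + T (-1) * (C t * G)) := by
      noncomm_ring
    have eR : ((1 + T 1) * C t : LaurentPolynomial A)
        = AddMonoidAlgebra.single 0 t + AddMonoidAlgebra.single 1 t := by
      rw [add_mul, one_mul, T_mul, single_eq_C_mul_T, single_eq_C_mul_T, T_zero, mul_one]
    have e2 := congrArg (fun p => (AddMonoidAlgebra.coeff (p : LaurentPolynomial A)) n) huG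
    rw [hud] at e2
    rw [eL, eR] at e2
    simp only [hadd, hsub, hT, hC, sub_neg_eq_add, AddMonoidAlgebra.coeff_add, AddMonoidAlgebra.coeff_single, Finsupp.add_apply, Finsupp.single_apply] at e2
    simp only [hg]
    exact e2
  -- symmetry of coefficients
  have hivT : ∀ k : ℤ, stmt14Invert A (T k) = T (-k) :=
    fun k => AddMonoidAlgebra.domCongr_single _ _ _
  have hivC : ∀ x : A, stmt14Invert A (C x) = C x :=
    fun x => AddMonoidAlgebra.domCongr_single _ _ _
  have hiu : stmt14Invert A u = u := by
    rw [hud]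
    rw [map_add, map_one, map_mul, map_add, map_sub, hivT, hivT, hivC, map_ofNat, neg_neg]
    congr 2
    abel
  have hivv : stmt14Invert A v = v := by
    have h1 : u * stmt14Invert A v = 1 := by rw [← hiu, ← map_mul, huv, map_one]
    calc stmt14Invert A v = (v * u) * stmt14Invert A v := by rw [hvu, one_mul]
      _ = v * (u * stmt14Invert A v) := by rw [mul_assoc]
      _ = v := by rw [h1, mul_one]
  have hiG : stmt14Invert A G = T (-1) * G := by
    rw [hGd, map_mul, map_mul, map_add, map_one, hivT, hivC, hivv]
    have h5 : (1 + T (-1) : LaurentPolynomial A) = T (-1) * (1 + T 1) := by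
      rw [mul_add, mul_one, ← T_add]
      norm_num [T_zero, add_comm]
    rw [h5, mul_assoc, mul_assoc, mul_assoc]
  have hsym : ∀ n : ℤ, g (-n) = g (n + 1) := by
    intro n
    have e3 := congrArg (fun p => (AddMonoidAlgebra.coeff (p : LaurentPolynomial A)) n) hiG
    rw [hT] at e3
    simp only [hg]
    rw [sub_neg_eq_add] at e3
    rw [stmt14Invert, AddMonoidAlgebra.coeff_domCongr] at e3
    exact e3
  -- finiteness of support
  have hbound : ∃ N : ℤ, 1 ≤ N ∧ ∀ n ≥ N, g n = 0 := by
    obtain ⟨B, hB⟩ := ((AddMonoidAlgebra.coeff G).support : Set ℤ).toFinite.bddAbove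
    refine ⟨max 1 (B + 1), le_max_left _ _, ?_⟩
    intro n hn
    by_contra h
    have h6 : n ∈ (AddMonoidAlgebra.coeff G).support := Finsupp.mem_support_iff.mpr (by simpa [hg] using h)
    have h7 : n ≤ B := hB (Finset.mem_coe.mpr h6)
    have h8 : B + 1 ≤ n := le_trans (le_max_right 1 (B + 1)) hn
    omega
  -- commutative subring
  set s : Set A := {t} ∪ Set.range g with hs
  have hcomm : ∀ x ∈ s, ∀ y ∈ s, x * y = y * x := by
    rintro x hx y hy
    rcases hx with hx | ⟨n, rfl⟩ <;> rcases hy with hy | ⟨m, rfl⟩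
    · rw [Set.mem_singleton_iff] at hx hy; rw [hx, hy]
    · rw [Set.mem_singleton_iff] at hx; rw [hx]; exact hgt m
    · rw [Set.mem_singleton_iff] at hy; rw [hy]; exact (hgt n).symm
    · exact hgg n m
  letI : CommRing (Subring.closure s) := Subring.closureCommRingOfComm hcomm
  have ht' : t ∈ Subring.closure s := Subring.subset_closure (Or.inl rfl)
  have hgmem : ∀ n, g n ∈ Subring.closure s := fun n => Subring.subset_closure (Or.inr ⟨n, rfl⟩)
  set t' : Subring.closure s := ⟨t, ht'⟩ with htd
  set a : ℤ → Subring.closure s := fun n => ⟨g n, hgmem n⟩ with had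
  have haval : ∀ n, ((a n : Subring.closure s) : A) = g n := fun n => by rw [had]
  have htval : ((t' : Subring.closure s) : A) = t := by rw [htd]
  -- lifted recurrence away from 0, 1
  have key : ∀ n : ℤ, n ≠ 0 → n ≠ 1 →
      a n + (t' * a (n - 1) - (t' * a n + t' * a n) + t' * a (n + 1)) = 0 := by
    intro n h0 h1
    have h := hrec n
    rw [if_neg (by omega : ¬ (0 : ℤ) = n), if_neg (by omega : ¬ (1 : ℤ) = n)] at h
    apply Subtype.ext
    push_cast [haval, htval]
    simpa using h
  -- the invariant Q is constant for n ≥ 1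
  have hQ : ∀ n : ℤ, 1 ≤ n →
      (t' * a (n+1) * a (n+1) - (2*t' - 1) * (a (n+1) * a n) + t' * a n * a n)
      = (t' * a 2 * a 2 - (2*t' - 1) * (a 2 * a 1) + t' * a 1 * a 1) := by
    refine Int.le_induction ?_ ?_
    · norm_num
    · intro m hm ih
      have ih := ih
      have h := key (m + 1) (by omega) (by omega)
      rw [show (m + 1 - 1 : ℤ) = m from by ring, show (m + 1 + 1 : ℤ) = m + 2 from by ring] at h
      rw [show (m + 1 + 1 : ℤ) = m + 2 from by ring, ← ih]
      linear_combination (a (m + 2) - a m) * h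
  -- Q vanishes far out, hence Q₁ = 0
  have hQ1 : t' * a 2 * a 2 - (2*t' - 1) * (a 2 * a 1) + t' * a 1 * a 1 = 0 := by
    obtain ⟨N, hN1, hN0⟩ := hbound
    have h1 := hQ N hN1
    have e0 : a N = 0 := Subtype.ext (by rw [haval]; simpa using hN0 N le_rfl)
    have e1 : a (N + 1) = 0 := Subtype.ext (by rw [haval]; simpa using hN0 (N+1) (by omega))
    rw [e0, e1] at h1
    rw [← h1]; ring
  -- symmetry : a 1 = a 0
  have hsym01 : a 1 = a 0 := Subtype.ext (by rw [haval, haval]; simpa using (hsym 0).symm)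
  -- recurrence at n = 1
  have hE : a 1 + (t' * a 0 - (t' * a 1 + t' * a 1) + t' * a 2) = t' := by
    have h := hrec 1
    rw [if_neg (by norm_num : ¬ (0:ℤ) = 1), if_pos rfl, zero_add] at h
    apply Subtype.ext
    push_cast [haval, htval]
    simpa using h
  rw [hsym01] at hE hQ1
  have hmain : (a 0) * (1 - a 0) = t' := by
    linear_combination (a 2 + 1 - a 0) * hE - hQ1
  have hval := congrArg (Subtype.val) hmain
  push_cast [haval, htval] at hval
  constructor
  · simpa [hg] using hval
  · exact (hK t rfl 0).symm

theorem stmt_14 (A : Type*) [Ring A] (t : A)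
    (hu : IsUnit ((1 : LaurentPolynomial A) + (T 1 - 2 + T (-1)) * C t))
    (F : A)
    (hF : F = ((AddMonoidAlgebra.coeff ((1 + T 1) * C t *
      ((hu.unit⁻¹ : (LaurentPolynomial A)ˣ) : LaurentPolynomial A) :
      LaurentPolynomial A) : ℤ →₀ A) 0)) :
    F * (1 - F) = t ∧ Commute F t := by
  have huv : (1 + (T 1 - 2 + T (-1)) * C t) *
      ((hu.unit⁻¹ : (LaurentPolynomial A)ˣ) : LaurentPolynomial A) = 1 := hu.mul_val_inv
  have hvu : ((hu.unit⁻¹ : (LaurentPolynomial A)ˣ) : LaurentPolynomial A) *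
      (1 + (T 1 - 2 + T (-1)) * C t) = 1 := hu.val_inv_mul
  have H := stmt14_aux t _ _ _ rfl huv hvu rfl
  rw [hF]
  exact H
end

section
/- Let A be any ring, P ∈ A, and suppose u = (1−P)+Pz is a unit in A[z,z⁻¹]. Then u' = P + (1−P)z is also a unit, and if E is the z⁰-coefficient of Pz·u⁻¹ and E' is the z⁰-coefficient of (1−P)z·u'⁻¹, then E' = 1 − E. -/
open LaurentPolynomial

noncomputable def sig (A : Type*) [Ring A] : LaurentPolynomial A →+* LaurentPolynomial A :=
  AddMonoidAlgebra.mapDomainRingHom A (AddEquiv.neg ℤ)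

lemma sig_apply (A : Type*) [Ring A] (f : LaurentPolynomial A) :
    sig A f = AddMonoidAlgebra.mapDomain (fun n : ℤ => -n) f := rfl

lemma sig_T (A : Type*) [Ring A] (n : ℤ) : sig A (T n) = T (-n) := by
  rw [sig_apply]
  exact AddMonoidAlgebra.mapDomain_single

lemma sig_C (A : Type*) [Ring A] (a : A) : sig A (C a) = C a := by
  rw [sig_apply]
  show AddMonoidAlgebra.mapDomain _ (AddMonoidAlgebra.single 0 a) = AddMonoidAlgebra.single 0 a
  rw [AddMonoidAlgebra.mapDomain_single, neg_zero]

lemma sig_zero_coeff (A : Type*) [Ring A] (f : LaurentPolynomial A) :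
    AddMonoidAlgebra.coeff (sig A f : LaurentPolynomial A) 0 = AddMonoidAlgebra.coeff f 0 := by
  have := Finsupp.mapDomain_apply (f := fun n : ℤ => -n) (fun a b h => by simpa using h) (AddMonoidAlgebra.coeff f) 0
  rw [sig_apply]
  simpa using this

theorem stmt_16 (A : Type*) [Ring A] (P : A)
    (hu : IsUnit ((1 - C P) + C P * T 1))
    (E : A)
    (hE : E = ((AddMonoidAlgebra.coeff (C P * T 1 * ((hu.unit⁻¹ : (LaurentPolynomial A)ˣ) : LaurentPolynomial A) :
      LaurentPolynomial A) : ℤ →₀ A) 0)) :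
    ∃ hu' : IsUnit (C P + (1 - C P) * T 1),
      ((AddMonoidAlgebra.coeff ((1 - C P) * T 1 *
        ((hu'.unit⁻¹ : (LaurentPolynomial A)ˣ) : LaurentPolynomial A) :
        LaurentPolynomial A) : ℤ →₀ A) 0) = 1 - E := by
  set u : LaurentPolynomial A := (1 - C P) + C P * T 1 with hu_def
  set v : LaurentPolynomial A := ((hu.unit⁻¹ : (LaurentPolynomial A)ˣ) : LaurentPolynomial A)
    with hv_def
  have huv : u * v = 1 := by
    have : (hu.unit : LaurentPolynomial A) * ↑hu.unit⁻¹ = 1 := hu.unit.mul_inv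
    rwa [hu.unit_spec] at this
  have hσu : sig A u = (1 - C P) + C P * T (-1) := by
    rw [hu_def]
    simp only [map_add, map_sub, map_mul, map_one, sig_C, sig_T]
  have key : C P + (1 - C P) * T 1 = T 1 * sig A u := by
    rw [hσu, mul_add, T_mul, T_mul, mul_assoc, ← T_add, neg_add_cancel, T_zero, mul_one,
      add_comm]
  have hu' : IsUnit (C P + (1 - C P) * T 1) := by
    rw [key]
    exact (isUnit_T 1).mul (hu.map (sig A))
  refine ⟨hu', ?_⟩
  have hinv : ((hu'.unit⁻¹ : (LaurentPolynomial A)ˣ) : LaurentPolynomial A)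
      = sig A v * T (-1) := by
    apply Units.inv_eq_of_mul_eq_one_right
    rw [hu'.unit_spec, key, mul_assoc, ← mul_assoc (sig A u), ← map_mul, huv, map_one, one_mul,
      ← T_add, add_neg_cancel, T_zero]
  rw [hinv]
  have : (1 - C P) * T 1 * (sig A v * T (-1)) = sig A ((1 - C P) * v) := by
    rw [map_mul, map_sub, map_one, sig_C, mul_assoc, T_mul, mul_T_assoc, neg_add_cancel,
      T_zero, mul_one]
  rw [this, sig_zero_coeff]
  have hsplit : (1 - C P) * v + C P * T 1 * v = 1 := by
    rw [← add_mul, ← hu_def, huv]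
  have := congrArg (fun f : LaurentPolynomial A => AddMonoidAlgebra.coeff f 0) hsplit
  simp only [AddMonoidAlgebra.coeff_add, Finsupp.add_apply] at this
  have h1 : AddMonoidAlgebra.coeff (1 : LaurentPolynomial A) 0 = 1 := by
    rw [AddMonoidAlgebra.one_def]
    exact Finsupp.single_eq_same
  rw [h1] at this
  rw [hE]
  exact eq_sub_of_add_eq this
end
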